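/- Let (f_k)_{k∈ℕ} be an orthonormal sequence in ℓ₂(ℕ,ℂ) with each f_k ∈ s, and let (N_k)_{k∈ℕ} be a family of finite nonempty pairwise disjoint subsets of ℕ. For r ∈ ℕ₀ let σ_r : ℕ → ℕ be a bijection such that the sequence k ↦ max_{j∈N_{σ_r(k)}} |f_j|_r is non-decreasing. Then there exists r₀ ∈ ℕ such that for all r ≥ r₀, lim_{k→∞} k / (max_{j∈N_{σ_r(k)}} |f_j|_r) = 0. -/

import Mathlib

noncomputable section

/-- Membership in the space `s` of rapidly decreasing sequences (the paper's index
`j ∈ {1,2,...}` corresponds to `j+1` here). -/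
def inS (ξ : ℕ → ℂ) : Prop :=
  ∀ q : ℕ, Summable fun j : ℕ => ‖ξ j‖ ^ 2 * ((j : ℝ) + 1) ^ (2 * q)

/-- The `q`-th norm `|ξ|_q` on `s`. -/
def sNorm (q : ℕ) (ξ : ℕ → ℂ) : ℝ :=
  Real.sqrt (∑' j : ℕ, ‖ξ j‖ ^ 2 * ((j : ℝ) + 1) ^ (2 * q))

open Filter Finset
open scoped ENNReal

theorem aux_mul_zero {b : ℕ → ℝ} (hb : ∀ n, 0 ≤ b n) (hm : Antitone b)
    (hs : Summable b) : Tendsto (fun n : ℕ => (n : ℝ) * b n) atTop (nhds 0) := by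
  have hT : Tendsto (fun m => ∑' i, b (i + m)) atTop (nhds 0) := tendsto_sum_nat_add b
  have hhalf : Tendsto (fun n : ℕ => n / 2) atTop atTop :=
    tendsto_atTop_atTop.2 fun c => ⟨2 * c, fun n hn => by omega⟩
  have hT2 : Tendsto (fun n : ℕ => 2 * ∑' i, b (i + n / 2)) atTop (nhds 0) := by
    have := (hT.comp hhalf).const_mul (2:ℝ)
    simpa using this
  refine tendsto_of_tendsto_of_tendsto_of_le_of_le tendsto_const_nhds hT2
    (fun n => mul_nonneg (Nat.cast_nonneg n) (hb n)) (fun n => ?_)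
  have hsum : Summable fun i => b (i + n / 2) := (summable_nat_add_iff (n / 2)).2 hs
  have h1 : ((n - n / 2 : ℕ) : ℝ) * b n ≤ ∑ i ∈ Finset.range (n - n / 2), b (i + n / 2) := by
    have := Finset.card_nsmul_le_sum (Finset.range (n - n / 2))
      (fun i => b (i + n / 2)) (b n) (fun i hi => hm (by
        simp only [Finset.mem_range] at hi; omega))
    simpa [nsmul_eq_mul] using this
  have h2 : ∑ i ∈ Finset.range (n - n / 2), b (i + n / 2) ≤ ∑' i, b (i + n / 2) :=
    Summable.sum_le_tsum _ (fun i _ => hb _) hsum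
  have h3 : (n : ℝ) ≤ 2 * ((n - n / 2 : ℕ) : ℝ) := by
    have : n ≤ 2 * (n - n / 2) := by omega
    exact_mod_cast this
  calc (n : ℝ) * b n ≤ (2 * ((n - n / 2 : ℕ) : ℝ)) * b n :=
        mul_le_mul_of_nonneg_right h3 (hb n)
    _ = 2 * (((n - n / 2 : ℕ) : ℝ) * b n) := by ring
    _ ≤ 2 * ∑' i, b (i + n / 2) := by
        have := h1.trans h2
        nlinarith [this]

theorem aux_sq_eq_one (f : ℕ → ℕ → ℂ)
    (hon : ∀ i j : ℕ,
      (∑' m : ℕ, (starRingEnd ℂ) (f i m) * f j m) = if i = j then 1 else 0)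
    (j : ℕ) : ∑' m, ‖f j m‖ ^ 2 = 1 := by
  have h := hon j j
  rw [if_pos rfl] at h
  have h2 : ∑' m, ((‖f j m‖ ^ 2 : ℝ) : ℂ) = 1 := by
    rw [← h]
    apply tsum_congr
    intro m
    rw [mul_comm, Complex.mul_conj]
    norm_cast
    rw [Complex.normSq_eq_norm_sq]
  rw [← Complex.ofReal_tsum] at h2
  exact_mod_cast h2

theorem aux_summable_sq (f : ℕ → ℕ → ℂ) (hfs : ∀ k, inS (f k)) (j : ℕ) :
    Summable fun m => ‖f j m‖ ^ 2 := by
  have h0 := hfs j 0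
  simpa using h0

theorem aux_bessel (f : ℕ → ℕ → ℂ) (hfs : ∀ k, inS (f k))
    (hon : ∀ i j : ℕ,
      (∑' m : ℕ, (starRingEnd ℂ) (f i m) * f j m) = if i = j then 1 else 0)
    (g : ℕ → ℕ) (hg : Function.Injective g) (K : Finset ℕ) (m : ℕ) :
    ∑ k ∈ K, ‖f (g k) m‖ ^ 2 ≤ 1 := by
  have hmem : ∀ k, Memℓp (f k) 2 := by
    intro k
    apply memℓp_gen
    have h0 := aux_summable_sq f hfs k
    have h2 : ((2:ℝ≥0∞)).toReal = ((2:ℕ):ℝ) := by norm_num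
    rw [h2]
    exact h0.congr fun i => (Real.rpow_natCast _ 2).symm
  set F : ℕ → lp (fun _ : ℕ => ℂ) 2 := fun k => ⟨f k, hmem k⟩ with hFdef
  have horth : Orthonormal ℂ F := by
    rw [orthonormal_iff_ite]
    intro i j
    have : (inner ℂ (F i) (F j) : ℂ) = ∑' m, (starRingEnd ℂ) (f i m) * f j m := by
      rw [lp.inner_eq_tsum]
      exact tsum_congr fun m => (RCLike.inner_apply _ _).trans (mul_comm _ _)
    rw [this, hon i j]
  set x : lp (fun _ : ℕ => ℂ) 2 := lp.single 2 m (1:ℂ) with hxdef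
  have hx : ‖x‖ = 1 := by
    have := lp.norm_single (E := fun _ : ℕ => ℂ) (p := 2) (by norm_num) m (1:ℂ)
    simpa [hxdef] using this
  have hb := (horth.comp g hg).sum_inner_products_le (s := K) x
  rw [hx] at hb
  calc ∑ k ∈ K, ‖f (g k) m‖ ^ 2
      = ∑ k ∈ K, ‖(inner ℂ ((F ∘ g) k) x : ℂ)‖ ^ 2 := by
        apply Finset.sum_congr rfl
        intro k _
        congr 1
        rw [hxdef, lp.inner_single_right]
        simp [RCLike.inner_apply, hFdef]
    _ ≤ 1 ^ 2 := hb
    _ = 1 := one_pow 2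

theorem aux_ht_summable (f : ℕ → ℕ → ℂ) (hfs : ∀ k, inS (f k)) (j : ℕ) :
    Summable fun m => ‖f j m‖ ^ 2 / ((m : ℝ) + 1) ^ 2 := by
  apply Summable.of_nonneg_of_le (fun m => by positivity) _ (aux_summable_sq f hfs j)
  intro m
  apply div_le_self (by positivity)
  nlinarith [Nat.cast_nonneg (α := ℝ) m]

theorem aux_ge1 (f : ℕ → ℕ → ℂ) (hfs : ∀ k, inS (f k))
    (hon : ∀ i j : ℕ,
      (∑' m : ℕ, (starRingEnd ℂ) (f i m) * f j m) = if i = j then 1 else 0)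
    (r j : ℕ) : 1 ≤ sNorm r (f j) := by
  rw [sNorm, Real.one_le_sqrt]
  calc (1:ℝ) = ∑' m, ‖f j m‖ ^ 2 := (aux_sq_eq_one f hon j).symm
    _ ≤ ∑' m, ‖f j m‖ ^ 2 * ((m : ℝ) + 1) ^ (2 * r) := by
        apply Summable.tsum_le_tsum _ (aux_summable_sq f hfs j) (hfs j r)
        intro m
        nlinarith [one_le_pow₀ (a := (m:ℝ)+1) (by linarith [Nat.cast_nonneg (α := ℝ) m])
          (n := 2*r), sq_nonneg ‖f j m‖]

set_option maxHeartbeats 1000000 in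
theorem aux_key (f : ℕ → ℕ → ℂ) (hfs : ∀ k, inS (f k))
    (hon : ∀ i j : ℕ,
      (∑' m : ℕ, (starRingEnd ℂ) (f i m) * f j m) = if i = j then 1 else 0)
    (r j M : ℕ) (hM2 : 2 ≤ M)
    (hMk : 2 * (sNorm r (f j)) ^ 2 ≤ (M : ℝ) ^ (2 * r)) :
    1 ≤ 2 * (M : ℝ) ^ 2 * ∑' m, ‖f j m‖ ^ 2 / ((m : ℝ) + 1) ^ 2 := by
  have hMpos : (0:ℝ) < (M:ℝ) := by
    have h : (0:ℕ) < M := by omega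
    exact_mod_cast h
  have hsq := aux_summable_sq f hfs j
  have hsplit := Summable.sum_add_tsum_nat_add (f := fun m => ‖f j m‖ ^ 2) M hsq
  rw [aux_sq_eq_one f hon j] at hsplit
  have hS_nonneg : (0:ℝ) ≤ ∑' m, ‖f j m‖ ^ 2 * ((m : ℝ) + 1) ^ (2 * r) :=
    tsum_nonneg fun m => by positivity
  have ha_sq : (sNorm r (f j)) ^ 2 = ∑' m, ‖f j m‖ ^ 2 * ((m : ℝ) + 1) ^ (2 * r) :=
    Real.sq_sqrt hS_nonneg
  have hhead : ∑ i ∈ Finset.range M, ‖f j i‖ ^ 2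
      ≤ (M:ℝ) ^ 2 * ∑' m, ‖f j m‖ ^ 2 / ((m : ℝ) + 1) ^ 2 := by
    have h1 : ∑ i ∈ Finset.range M, ‖f j i‖ ^ 2
        ≤ ∑ i ∈ Finset.range M, (M:ℝ) ^ 2 * (‖f j i‖ ^ 2 / ((i:ℝ)+1) ^ 2) := by
      apply Finset.sum_le_sum
      intro i hi
      have hi1 : (i:ℝ) + 1 ≤ (M:ℝ) := by
        have h := Finset.mem_range.1 hi
        exact_mod_cast Nat.succ_le_of_lt h
      have hd : (0:ℝ) < ((i:ℝ)+1) ^ 2 := by positivity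
      have he : (M:ℝ) ^ 2 * (‖f j i‖ ^ 2 / ((i:ℝ)+1) ^ 2)
          = ‖f j i‖ ^ 2 * (M:ℝ) ^ 2 / ((i:ℝ)+1) ^ 2 := by ring
      rw [he, le_div_iff₀ hd]
      nlinarith [sq_nonneg ‖f j i‖, mul_le_mul_of_nonneg_left
        (pow_le_pow_left₀ (by positivity) hi1 2) (sq_nonneg ‖f j i‖)]
    rw [← Finset.mul_sum] at h1
    refine h1.trans ?_
    apply mul_le_mul_of_nonneg_left _ (by positivity)
    exact Summable.sum_le_tsum _ (fun i _ => by positivity) (aux_ht_summable f hfs j)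
  have htail : (∑' i, ‖f j (i + M)‖ ^ 2) ≤ 1 / 2 := by
    have hw : Summable fun m => ‖f j m‖ ^ 2 * ((m : ℝ) + 1) ^ (2 * r) := hfs j r
    have hws : Summable fun i => ‖f j (i + M)‖ ^ 2 * (((i + M : ℕ) : ℝ) + 1) ^ (2 * r) :=
      (summable_nat_add_iff M).2 hw
    have hsq' : Summable fun i => ‖f j (i + M)‖ ^ 2 := (summable_nat_add_iff M).2 hsq
    have hws' : Summable fun i =>
        ‖f j (i + M)‖ ^ 2 * (((i + M : ℕ) : ℝ) + 1) ^ (2 * r) / (M:ℝ) ^ (2 * r) :=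
      hws.div_const _
    have h1 : (∑' i, ‖f j (i + M)‖ ^ 2)
        ≤ ∑' i, ‖f j (i + M)‖ ^ 2 * (((i + M : ℕ) : ℝ) + 1) ^ (2 * r) / (M:ℝ) ^ (2 * r) := by
      refine Summable.tsum_le_tsum (fun i => ?_) hsq' hws'
      have hge : (M:ℝ) ^ (2*r) ≤ (((i + M : ℕ) : ℝ) + 1) ^ (2 * r) := by
        apply pow_le_pow_left₀ hMpos.le
        push_cast
        linarith [Nat.cast_nonneg (α := ℝ) i]
      rw [le_div_iff₀ (by positivity)]
      nlinarith [sq_nonneg ‖f j (i+M)‖, mul_le_mul_of_nonneg_left hge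
        (sq_nonneg ‖f j (i+M)‖)]
    rw [tsum_div_const] at h1
    have h2 : (∑' i, ‖f j (i + M)‖ ^ 2 * (((i + M : ℕ) : ℝ) + 1) ^ (2 * r))
        ≤ ∑' m, ‖f j m‖ ^ 2 * ((m : ℝ) + 1) ^ (2 * r) := by
      have hsplit2 := Summable.sum_add_tsum_nat_add
        (f := fun m => ‖f j m‖ ^ 2 * ((m : ℝ) + 1) ^ (2 * r)) M hw
      have hh : 0 ≤ ∑ i ∈ Finset.range M, ‖f j i‖ ^ 2 * ((i : ℝ) + 1) ^ (2 * r) :=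
        Finset.sum_nonneg fun i _ => by positivity
      linarith [hsplit2]
    have h3 : (∑' m, ‖f j m‖ ^ 2 * ((m : ℝ) + 1) ^ (2 * r)) / (M:ℝ) ^ (2*r) ≤ 1/2 := by
      rw [div_le_iff₀ (by positivity)]
      nlinarith [hMk, ha_sq]
    calc (∑' i, ‖f j (i + M)‖ ^ 2)
        ≤ (∑' i, ‖f j (i + M)‖ ^ 2 * (((i + M : ℕ) : ℝ) + 1) ^ (2 * r)) / (M:ℝ) ^ (2*r) := h1
      _ ≤ (∑' m, ‖f j m‖ ^ 2 * ((m : ℝ) + 1) ^ (2 * r)) / (M:ℝ) ^ (2*r) :=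
          (div_le_div_iff_of_pos_right (by positivity)).2 h2
      _ ≤ 1/2 := h3
  have hh0 : 0 ≤ ∑ i ∈ Finset.range M, ‖f j i‖ ^ 2 :=
    Finset.sum_nonneg fun i _ => by positivity
  linarith


set_option maxHeartbeats 1000000 in
/-- Let `(f_k)` be an orthonormal sequence in `ℓ₂` with each `f_k ∈ s`, `(N_k)` finite
nonempty pairwise disjoint subsets of `ℕ`, and for each `r` let `σ_r` be a bijection of
`ℕ` making `k ↦ max_{j ∈ N_{σ_r(k)}} |f_j|_r` non-decreasing. Then there is `r₀` such that
for all `r ≥ r₀`, `k / max_{j ∈ N_{σ_r(k)}} |f_j|_r → 0` as `k → ∞`. -/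
theorem stmt_11 (f : ℕ → ℕ → ℂ) (hfs : ∀ k, inS (f k))
    (hon : ∀ i j : ℕ,
      (∑' m : ℕ, (starRingEnd ℂ) (f i m) * f j m) = if i = j then 1 else 0)
    (N : ℕ → Finset ℕ) (hne : ∀ k, (N k).Nonempty)
    (hdisj : ∀ k l, k ≠ l → Disjoint (N k) (N l))
    (σ : ℕ → ℕ → ℕ) (hσbij : ∀ r, Function.Bijective (σ r))
    (hσmono : ∀ r : ℕ,
      Monotone fun k => (N (σ r k)).sup' (hne (σ r k)) fun j => sNorm r (f j)) :
    ∃ r₀ : ℕ, ∀ r : ℕ, r₀ ≤ r →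
      Filter.Tendsto
        (fun k : ℕ => (k : ℝ) / (N (σ r k)).sup' (hne (σ r k)) fun j => sNorm r (f j))
        Filter.atTop (nhds 0) := by
  classical
  refine ⟨3, fun r hr => ?_⟩
  set A : ℕ → ℝ := fun k => (N (σ r k)).sup' (hne (σ r k)) fun j => sNorm r (f j) with hA
  show Filter.Tendsto (fun k : ℕ => (k : ℝ) / A k) Filter.atTop (nhds 0)
  have hAmono : Monotone A := hσmono r
  choose J hJmem hJeq using fun k =>
    Finset.exists_mem_eq_sup' (hne (σ r k)) (fun j => sNorm r (f j))
  have hAk : ∀ k, A k = sNorm r (f (J k)) := fun k => hJeq k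
  have hJinj : Function.Injective J := by
    intro k l hkl
    by_contra hne'
    have hd := hdisj (σ r k) (σ r l) (fun h => hne' ((hσbij r).1 h))
    exact (Finset.disjoint_left.1 hd) (hJmem k) (hkl ▸ hJmem l)
  have hA_ge1 : ∀ k, 1 ≤ A k := fun k => (hAk k) ▸ aux_ge1 f hfs hon r (J k)
  set t : ℕ → ℝ := fun j => ∑' m, ‖f j m‖ ^ 2 / ((m : ℝ) + 1) ^ 2 with htdef
  have ht_nonneg : ∀ j, 0 ≤ t j := fun j => tsum_nonneg fun m => by positivity
  -- choice of M
  have hex : ∀ k, ∃ M : ℕ, 2 ≤ M ∧ 2 * (A k) ^ 2 ≤ (M : ℝ) ^ (2 * r) := by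
    intro k
    set Mc : ℕ := max 2 ⌈2 * (A k) ^ 2⌉₊ with hMc
    refine ⟨Mc, le_max_left _ _, ?_⟩
    have h1 : 2 * (A k) ^ 2 ≤ (⌈2 * (A k) ^ 2⌉₊ : ℝ) := Nat.le_ceil _
    have h2 : ((⌈2 * (A k) ^ 2⌉₊ : ℕ) : ℝ) ≤ (Mc : ℝ) := by
      exact_mod_cast le_max_right _ _
    have h3 : (Mc : ℝ) ≤ (Mc : ℝ) ^ (2*r) := by
      apply le_self_pow₀ _ (by omega)
      have h4 : (1:ℕ) ≤ Mc := le_trans (by norm_num) (le_max_left _ _)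
      exact_mod_cast h4
    linarith
  set Mk : ℕ → ℕ := fun k => Nat.find (hex k) with hMkdef
  have hMspec : ∀ k, 2 ≤ Mk k ∧ 2 * (A k) ^ 2 ≤ ((Mk k : ℕ) : ℝ) ^ (2 * r) :=
    fun k => Nat.find_spec (hex k)
  have hMpos : ∀ k, (0:ℝ) < ((Mk k : ℕ):ℝ) := by
    intro k
    have h := (hMspec k).1
    have h' : (0:ℕ) < Mk k := by omega
    exact_mod_cast h'
  have hMmono : Monotone Mk := by
    intro k l hkl
    apply Nat.find_min' (hex k)
    refine ⟨(hMspec l).1, le_trans ?_ (hMspec l).2⟩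
    have h := hAmono hkl
    nlinarith [hA_ge1 k, hA_ge1 l]
  have hMlow : ∀ k, ((Mk k - 1 : ℕ) : ℝ) ^ (2 * r) < 2 * (A k) ^ 2 := by
    intro k
    have h2 := (hMspec k).1
    have hmin := Nat.find_min (hex k) (m := Mk k - 1) (show Mk k - 1 < Mk k by omega)
    by_cases hc : 2 ≤ Mk k - 1
    · have hlt : ¬ (2 * (A k) ^ 2 ≤ ((Mk k - 1 : ℕ) : ℝ) ^ (2 * r)) :=
        fun h => hmin ⟨hc, h⟩
      exact lt_of_not_ge hlt
    · have h1 : Mk k - 1 = 1 := by omega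
      rw [h1]
      simp only [Nat.cast_one, one_pow]
      nlinarith [hA_ge1 k]
  have htlow : ∀ k, 1 ≤ 2 * ((Mk k : ℕ) : ℝ) ^ 2 * t (J k) := by
    intro k
    apply aux_key f hfs hon r (J k) (Mk k) (hMspec k).1
    rw [← hAk k]
    exact (hMspec k).2
  set b : ℕ → ℝ := fun k => 1 / ((Mk k : ℕ) : ℝ) ^ 2 with hbdef
  have hb_nonneg : ∀ k, 0 ≤ b k := fun k => by positivity
  have hb_le : ∀ k, b k ≤ 2 * t (J k) := by
    intro k
    have hM0 : (0:ℝ) < ((Mk k:ℕ):ℝ) ^ 2 := pow_pos (hMpos k) 2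
    have hbk : b k = 1 / ((Mk k : ℕ) : ℝ) ^ 2 := rfl
    rw [hbk, div_le_iff₀ hM0]
    nlinarith [htlow k]
  have hbsum : Summable b := by
    have hC : Summable fun m : ℕ => 1 / ((m:ℝ) + 1) ^ 2 := by
      have h1 : Summable fun n : ℕ => 1 / (n:ℝ) ^ 2 :=
        Real.summable_one_div_nat_pow.2 (by norm_num)
      have h2 := (summable_nat_add_iff 1).2 h1
      exact h2.congr fun n => by push_cast; ring
    have htJ : Summable fun k => t (J k) := by
      apply summable_of_sum_le (fun k => ht_nonneg (J k))
      intro K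
      have hswap : ∑ k ∈ K, t (J k) = ∑' m, ∑ k ∈ K, ‖f (J k) m‖ ^ 2 / ((m:ℝ)+1) ^ 2 :=
        (Summable.tsum_finsetSum fun k _ => aux_ht_summable f hfs (J k)).symm
      rw [hswap]
      apply Summable.tsum_le_tsum _ (summable_sum fun k _ => aux_ht_summable f hfs (J k)) hC
      intro m
      rw [← Finset.sum_div]
      apply (div_le_div_iff_of_pos_right (by positivity)).2
      exact aux_bessel f hfs hon J hJinj K m
    exact Summable.of_nonneg_of_le hb_nonneg hb_le (htJ.mul_left 2)
  have hbanti : Antitone b := by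
    intro k l hkl
    have h1 : ((Mk k:ℕ):ℝ) ≤ ((Mk l:ℕ):ℝ) := by exact_mod_cast hMmono hkl
    exact one_div_le_one_div_of_le (pow_pos (hMpos k) 2)
      (pow_le_pow_left₀ (hMpos k).le h1 2)
  have htend := aux_mul_zero hb_nonneg hbanti hbsum
  have hkey : ∀ k, ((Mk k:ℕ):ℝ) ^ 2 ≤ 4 * Real.sqrt 2 * A k := by
    intro k
    have h2 := (hMspec k).1
    set m1 : ℝ := ((Mk k - 1 : ℕ) : ℝ) with hm1
    have hm1ge1 : (1:ℝ) ≤ m1 := by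
      rw [hm1]
      have h : (1:ℕ) ≤ Mk k - 1 := by omega
      exact_mod_cast h
    have hMeq : ((Mk k:ℕ):ℝ) = m1 + 1 := by
      rw [hm1]
      have h : 1 ≤ Mk k := by omega
      push_cast [Nat.cast_sub h]
      ring
    have hml := hMlow k
    rw [← hm1] at hml
    have h1 : m1 ^ r ≤ Real.sqrt 2 * A k := by
      by_contra hcon
      push_neg at hcon
      have hs2 : Real.sqrt 2 ^ 2 = 2 := Real.sq_sqrt (by norm_num)
      have hsA : 0 ≤ Real.sqrt 2 * A k := by
        have hg := hA_ge1 k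
        have hg2 := Real.sqrt_nonneg 2
        nlinarith
      have hpm : m1 ^ (2*r) = (m1 ^ r) ^ 2 := by rw [mul_comm, pow_mul]
      rw [hpm] at hml
      nlinarith [hcon, hsA, hs2, hml]
    have h3 : m1 ^ 3 ≤ m1 ^ r := pow_le_pow_right₀ hm1ge1 hr
    have h4 : m1 ^ 2 ≤ m1 ^ 3 := pow_le_pow_right₀ hm1ge1 (by norm_num)
    rw [hMeq]
    nlinarith [h1, h3, h4, hm1ge1]
  have hfinal : ∀ k : ℕ, (k:ℝ) / A k ≤ 4 * Real.sqrt 2 * ((k:ℝ) * b k) := by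
    intro k
    have hA0 : (0:ℝ) < A k := lt_of_lt_of_le one_pos (hA_ge1 k)
    have hM0 : (0:ℝ) < ((Mk k:ℕ):ℝ) ^ 2 := pow_pos (hMpos k) 2
    have hrhs : 4 * Real.sqrt 2 * ((k:ℝ) * b k)
        = (4 * Real.sqrt 2 * k) / ((Mk k:ℕ):ℝ) ^ 2 := by
      have hbk : b k = 1 / ((Mk k : ℕ) : ℝ) ^ 2 := rfl
      rw [hbk]; ring
    rw [hrhs, div_le_div_iff₀ hA0 hM0]
    nlinarith [Nat.cast_nonneg (α := ℝ) k, hkey k, hA0]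
  have hupper : Tendsto (fun k : ℕ => 4 * Real.sqrt 2 * ((k:ℝ) * b k)) atTop (nhds 0) := by
    have h := htend.const_mul (4 * Real.sqrt 2)
    simpa [mul_comm] using h
  refine tendsto_of_tendsto_of_tendsto_of_le_of_le tendsto_const_nhds hupper
    (fun k => div_nonneg (Nat.cast_nonneg k)
      (le_of_lt (lt_of_lt_of_le one_pos (hA_ge1 k)))) hfinal

end
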